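/- arXiv:2011.08290 — 3 statements merged into one kernel-verified Lean document; each statement's English description precedes it below -/
import Mathlib

section
/- Let W be an n×n real matrix with nonnegative entries, all row sums equal to 1, and all entries bounded by C/n for some constant C > 0. Let 0 ≤ ρ < 1 and suppose I − ρW is invertible, and set Z_ρ = W(I − ρW)^{-1}. Then Tr(Z_ρ Z_ρᵀ) ≤ C/(1−ρ)². -/
open Matrix BigOperators

/-- If W is row-stochastic with all entries at most C/n, 0 ≤ ρ < 1, and I − ρW is
invertible, then Z_ρ = W(I − ρW)⁻¹ satisfies Tr(Z_ρ Z_ρᵀ) ≤ C/(1−ρ)². -/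
theorem trace_Z_Zt_le (n : ℕ) (W : Matrix (Fin n) (Fin n) ℝ)
    (C : ℝ) (hC : 0 < C)
    (hnonneg : ∀ i j, 0 ≤ W i j)
    (hrow : ∀ i, ∑ j, W i j = 1)
    (hbound : ∀ i j, W i j ≤ C / n)
    (ρ : ℝ) (hρ0 : 0 ≤ ρ) (hρ1 : ρ < 1)
    (hinv : IsUnit (1 - ρ • W)) :
    ((W * (1 - ρ • W)⁻¹) * (W * (1 - ρ • W)⁻¹)ᵀ).trace ≤ C / (1 - ρ) ^ 2 := by
  have h1ρ : (0:ℝ) < 1 - ρ := by linarith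
  rcases Nat.eq_zero_or_pos n with hn | hn
  · subst hn
    have : ((W * (1 - ρ • W)⁻¹) * (W * (1 - ρ • W)⁻¹)ᵀ).trace = 0 := by
      simp [Matrix.trace]
    rw [this]
    positivity
  have hnR : (0:ℝ) < (n:ℝ) := by exact_mod_cast hn
  set M := (1 - ρ • W)⁻¹ with hMdef
  have hdet : IsUnit (1 - ρ • W).det := (Matrix.isUnit_iff_isUnit_det _).mp hinv
  have hMl : M * (1 - ρ • W) = 1 := Matrix.nonsing_inv_mul _ hdet
  have hMr : (1 - ρ • W) * M = 1 := Matrix.mul_nonsing_inv _ hdet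
  have hWM : M = 1 + ρ • (W * M) := by
    have h := hMr
    rw [sub_mul, one_mul, Matrix.smul_mul] at h
    exact eq_add_of_sub_eq h
  have hMW : M = 1 + ρ • (M * W) := by
    have h := hMl
    rw [mul_sub, mul_one, Matrix.mul_smul] at h
    exact eq_add_of_sub_eq h
  -- nonnegativity of M via a minimal-entry argument
  have hMnonneg : ∀ i j, 0 ≤ M i j := by
    have hne : (Finset.univ : Finset (Fin n × Fin n)).Nonempty := by
      have : 0 < n := hn
      exact ⟨(⟨0, this⟩, ⟨0, this⟩), Finset.mem_univ _⟩
    obtain ⟨⟨i0, j0⟩, _, hmin⟩ :=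
      Finset.exists_min_image (Finset.univ : Finset (Fin n × Fin n)) (fun p => M p.1 p.2) hne
    have key : ∀ i j, M i0 j0 ≤ M i j := fun i j => hmin (i, j) (Finset.mem_univ _)
    have h1 : M i0 j0 = (1 : Matrix (Fin n) (Fin n) ℝ) i0 j0 + ρ * ∑ k, W i0 k * M k j0 := by
      conv_lhs => rw [hWM]
      simp [Matrix.add_apply, Matrix.smul_apply, Matrix.mul_apply]
    have h2 : ρ * M i0 j0 ≤ ρ * ∑ k, W i0 k * M k j0 := by
      apply mul_le_mul_of_nonneg_left _ hρ0
      calc M i0 j0 = (∑ k, W i0 k) * M i0 j0 := by rw [hrow]; ring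
        _ = ∑ k, W i0 k * M i0 j0 := by rw [Finset.sum_mul]
        _ ≤ ∑ k, W i0 k * M k j0 :=
            Finset.sum_le_sum fun k _ => mul_le_mul_of_nonneg_left (key k j0) (hnonneg i0 k)
    have h3 : 0 ≤ (1 : Matrix (Fin n) (Fin n) ℝ) i0 j0 := by
      rw [Matrix.one_apply]; split <;> norm_num
    have hfin : 0 ≤ M i0 j0 := by nlinarith
    intro i j; exact le_trans hfin (key i j)
  -- row sums of M
  have hMrow : ∀ i, ∑ j, M i j = 1 / (1 - ρ) := by
    intro i
    have h : ∑ j, M i j = 1 + ρ * ∑ j, M i j := by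
      conv_lhs => rw [hMW]
      have hcong : ∀ j ∈ Finset.univ, (1 + ρ • (M * W)) i j =
          (1 : Matrix (Fin n) (Fin n) ℝ) i j + ρ * (M * W) i j := fun j _ => by
        simp [Matrix.add_apply, Matrix.smul_apply]
      rw [Finset.sum_congr rfl hcong, Finset.sum_add_distrib, ← Finset.mul_sum]
      congr 1
      · simp [Matrix.one_apply]
      · congr 1
        calc ∑ j, (M * W) i j = ∑ j, ∑ k, M i k * W k j := by
              simp [Matrix.mul_apply]
          _ = ∑ k, ∑ j, M i k * W k j := Finset.sum_comm
          _ = ∑ k, M i k * ∑ j, W k j := by simp [Finset.mul_sum]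
          _ = ∑ k, M i k := by simp [hrow]
    have hne : (1:ℝ) - ρ ≠ 0 := ne_of_gt h1ρ
    field_simp
    linarith
  -- W commutes with M
  have hsw : (1 - ρ • W) * W = W * (1 - ρ • W) := by
    rw [sub_mul, mul_sub, one_mul, mul_one, Matrix.smul_mul, Matrix.mul_smul]
  have hcomm : W * M = M * W := by
    calc W * M = (M * (1 - ρ • W)) * (W * M) := by rw [hMl, one_mul]
      _ = M * ((1 - ρ • W) * W) * M := by rw [mul_assoc, mul_assoc, ← mul_assoc (1 - ρ • W)]
      _ = M * (W * (1 - ρ • W)) * M := by rw [hsw]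
      _ = (M * W) * ((1 - ρ • W) * M) := by rw [mul_assoc, mul_assoc, mul_assoc]
      _ = M * W := by rw [hMr, mul_one]
  set Z := W * M with hZdef
  have hZnonneg : ∀ i j, 0 ≤ Z i j := by
    intro i j
    rw [hZdef, Matrix.mul_apply]
    exact Finset.sum_nonneg fun k _ => mul_nonneg (hnonneg i k) (hMnonneg k j)
  have hZbound : ∀ i j, Z i j ≤ C / n * (1 / (1 - ρ)) := by
    intro i j
    rw [hcomm, Matrix.mul_apply]
    calc ∑ k, M i k * W k j ≤ ∑ k, M i k * (C / n) :=
          Finset.sum_le_sum fun k _ => mul_le_mul_of_nonneg_left (hbound k j) (hMnonneg i k)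
      _ = (∑ k, M i k) * (C / n) := by rw [Finset.sum_mul]
      _ = C / n * (1 / (1 - ρ)) := by rw [hMrow]; ring
  have hZrow : ∀ i, ∑ j, Z i j = 1 / (1 - ρ) := by
    intro i
    calc ∑ j, Z i j = ∑ j, ∑ k, W i k * M k j := by simp [hZdef, Matrix.mul_apply]
      _ = ∑ k, ∑ j, W i k * M k j := Finset.sum_comm
      _ = ∑ k, W i k * ∑ j, M k j := by simp [Finset.mul_sum]
      _ = ∑ k, W i k * (1 / (1 - ρ)) := by simp only [hMrow]
      _ = (∑ k, W i k) * (1 / (1 - ρ)) := by rw [Finset.sum_mul]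
      _ = 1 / (1 - ρ) := by rw [hrow, one_mul]
  have htr : ((W * (1 - ρ • W)⁻¹) * (W * (1 - ρ • W)⁻¹)ᵀ).trace = ∑ i, ∑ j, Z i j * Z i j := by
    rw [show W * (1 - ρ • W)⁻¹ = Z from rfl]
    simp only [Matrix.trace, Matrix.diag_apply, Matrix.mul_apply, Matrix.transpose_apply]
  rw [htr]
  calc ∑ i, ∑ j, Z i j * Z i j
      ≤ ∑ i, ∑ j, C / n * (1 / (1 - ρ)) * Z i j := by
        apply Finset.sum_le_sum; intro i _
        apply Finset.sum_le_sum; intro j _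
        exact mul_le_mul_of_nonneg_right (hZbound i j) (hZnonneg i j)
    _ = ∑ i, C / n * (1 / (1 - ρ)) * (1 / (1 - ρ)) := by
        apply Finset.sum_congr rfl; intro i _
        rw [← Finset.mul_sum, hZrow]
    _ = n * (C / n * (1 / (1 - ρ)) * (1 / (1 - ρ))) := by
        rw [Finset.sum_const, Finset.card_univ, Fintype.card_fin, nsmul_eq_mul]
    _ = C / (1 - ρ) ^ 2 := by
        field_simp
end

section
/- Let n ≥ 2, let W = (n−1)^{-1}(𝟙𝟙ᵀ − I) be the row-normalized weight matrix of the complete graph on n vertices, and let H_* = n^{-1} 𝟙𝟙ᵀ. Let ρ ∈ ℝ with ρ ≠ 1 and ρ ≠ −(n−1). Then I − ρW is invertible, Z_ρ := W(I − ρW)^{-1} = (1−ρ)^{-1} H_* − (n−1+ρ)^{-1}(I − H_*), and Tr(Z_ρ² + Z_ρ Z_ρᵀ) = 2[ 1/(1−ρ)² + (n−1)/(n−1+ρ)² ]. -/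
open Matrix BigOperators

/-- For the complete graph on n ≥ 2 vertices with W = (n−1)⁻¹(𝟙𝟙ᵀ − I) and
H_* = n⁻¹𝟙𝟙ᵀ, and ρ ≠ 1, ρ ≠ −(n−1): I − ρW is invertible,
Z_ρ = W(I − ρW)⁻¹ = (1−ρ)⁻¹H_* − (n−1+ρ)⁻¹(I − H_*), and
Tr(Z_ρ² + Z_ρZ_ρᵀ) = 2[1/(1−ρ)² + (n−1)/(n−1+ρ)²]. -/
theorem complete_graph_Z_trace (n : ℕ) (hn : 2 ≤ n)
    (W H Z : Matrix (Fin n) (Fin n) ℝ)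
    (hW : W = ((n : ℝ) - 1)⁻¹ • (Matrix.of (fun _ _ : Fin n => (1 : ℝ)) - 1))
    (hH : H = (n : ℝ)⁻¹ • Matrix.of (fun _ _ : Fin n => (1 : ℝ)))
    (ρ : ℝ) (hρ1 : ρ ≠ 1) (hρ2 : ρ ≠ -((n : ℝ) - 1))
    (hZ : Z = W * (1 - ρ • W)⁻¹) :
    IsUnit (1 - ρ • W) ∧
    Z = (1 - ρ)⁻¹ • H - ((n : ℝ) - 1 + ρ)⁻¹ • (1 - H) ∧
    (Z * Z + Z * Zᵀ).trace
      = 2 * (1 / (1 - ρ) ^ 2 + ((n : ℝ) - 1) / ((n : ℝ) - 1 + ρ) ^ 2) := by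
  have hn2 : (2 : ℝ) ≤ (n : ℝ) := by exact_mod_cast hn
  have hn0 : (n : ℝ) ≠ 0 := by linarith
  have hn1 : (n : ℝ) - 1 ≠ 0 := by linarith
  have h1ρ : (1 : ℝ) - ρ ≠ 0 := fun h => hρ1 (by linarith)
  have hnρ : (n : ℝ) - 1 + ρ ≠ 0 := fun h => hρ2 (by linarith)
  set J : Matrix (Fin n) (Fin n) ℝ := Matrix.of (fun _ _ : Fin n => (1 : ℝ)) with hJ
  have hJJ : J * J = (n : ℝ) • J := by
    ext i j
    simp [hJ, Matrix.mul_apply, Matrix.smul_apply]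
  have hJH : J = (n : ℝ) • H := by
    rw [hH, smul_smul, mul_inv_cancel₀ hn0, one_smul]
  have hHH : H * H = H := by
    rw [hH, Matrix.smul_mul, Matrix.mul_smul, hJJ, smul_smul, smul_smul]
    congr 1
    field_simp
  -- product of combinations a•H + b•(1-H)
  have comb : ∀ a b c d : ℝ,
      (a • H + b • (1 - H)) * (c • H + d • (1 - H))
        = (a*c) • H + (b*d) • (1 - H) := by
    intro a b c d
    have h1 : H * (1 - H) = 0 := by rw [mul_sub, mul_one, hHH, sub_self]
    have h2 : (1 - H) * H = 0 := by rw [sub_mul, one_mul, hHH, sub_self]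
    have h3 : (1 - H) * (1 - H) = 1 - H := by
      rw [sub_mul, one_mul, mul_sub, mul_one, hHH]; abel
    rw [add_mul, mul_add, mul_add, Matrix.smul_mul, Matrix.smul_mul,
      Matrix.smul_mul, Matrix.smul_mul, Matrix.mul_smul, Matrix.mul_smul,
      Matrix.mul_smul, Matrix.mul_smul, hHH, h1, h2, h3]
    simp [smul_smul, mul_comm]
  have hW' : W = (1 : ℝ) • H + (-((n : ℝ) - 1)⁻¹) • (1 - H) := by
    rw [hW, hJH]
    match_scalars <;> field_simp <;> ring
  have hA : (1 : Matrix (Fin n) (Fin n) ℝ) - ρ • W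
      = (1 - ρ) • H + (((n : ℝ) - 1 + ρ)/((n : ℝ) - 1)) • (1 - H) := by
    rw [hW']
    match_scalars <;> field_simp <;> ring
  set M : Matrix (Fin n) (Fin n) ℝ :=
    (1 - ρ)⁻¹ • H + (((n : ℝ) - 1)/((n : ℝ) - 1 + ρ)) • (1 - H) with hM
  have hAM : (1 - ρ • W) * M = 1 := by
    rw [hA, hM, comb]
    rw [mul_inv_cancel₀ h1ρ,
      show ((n:ℝ)-1+ρ)/((n:ℝ)-1) * (((n:ℝ)-1)/((n:ℝ)-1+ρ)) = 1 by field_simp]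
    simp
  have hMA : M * (1 - ρ • W) = 1 := by
    rw [hA, hM, comb]
    rw [inv_mul_cancel₀ h1ρ,
      show ((n:ℝ)-1)/((n:ℝ)-1+ρ) * (((n:ℝ)-1+ρ)/((n:ℝ)-1)) = 1 by field_simp]
    simp
  have hUnit : IsUnit (1 - ρ • W) := ⟨⟨1 - ρ • W, M, hAM, hMA⟩, rfl⟩
  have hInv : (1 - ρ • W)⁻¹ = M := Matrix.inv_eq_right_inv hAM
  have hZ' : Z = (1 - ρ)⁻¹ • H + (-((n : ℝ) - 1 + ρ)⁻¹) • (1 - H) := by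
    rw [hZ, hInv, hW', hM, comb]
    rw [one_mul,
      show -((n:ℝ)-1)⁻¹ * (((n:ℝ)-1)/((n:ℝ)-1+ρ)) = -((n:ℝ)-1+ρ)⁻¹ by
        field_simp]
  have hZeq : Z = (1 - ρ)⁻¹ • H - ((n : ℝ) - 1 + ρ)⁻¹ • (1 - H) := by
    rw [hZ', neg_smul]; abel
  refine ⟨hUnit, hZeq, ?_⟩
  have hHsymm : Hᵀ = H := by
    rw [hH]; ext i j; simp [Matrix.transpose_apply, hJ]
  have hZsymm : Zᵀ = Z := by
    rw [hZ']
    simp [Matrix.transpose_add, Matrix.transpose_smul, Matrix.transpose_sub,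
      hHsymm]
  have hZZ : Z * Z = ((1 - ρ)⁻¹ * (1 - ρ)⁻¹) • H
      + ((-((n : ℝ) - 1 + ρ)⁻¹) * (-((n : ℝ) - 1 + ρ)⁻¹)) • (1 - H) := by
    rw [hZ', comb]
  have htrH : H.trace = 1 := by
    rw [hH, Matrix.trace_smul]
    have : (Matrix.of (fun _ _ : Fin n => (1 : ℝ))).trace = (n : ℝ) := by
      simp [Matrix.trace, Matrix.diag]
    rw [this, smul_eq_mul, inv_mul_cancel₀ hn0]
  have htr1H : (1 - H : Matrix (Fin n) (Fin n) ℝ).trace = (n : ℝ) - 1 := by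
    rw [Matrix.trace_sub, htrH, Matrix.trace_one]
    simp
  rw [hZsymm, hZZ, Matrix.trace_add, Matrix.trace_add, Matrix.trace_smul,
    Matrix.trace_smul, htrH, htr1H]
  simp only [smul_eq_mul]
  field_simp
  ring
end

section
/- Let n ≥ 2 and let W = (n−1)^{-1}(𝟙𝟙ᵀ − I) be the row-normalized weight matrix of the complete graph on n vertices. Let H be any symmetric idempotent n×n real matrix with H𝟙 = 𝟙. Then for every ρ ∈ ℝ, (I − H)(I − ρW) = (1 + ρ/(n−1))(I − H). -/
open Matrix BigOperators

/-- For the complete graph on n ≥ 2 vertices with W = (n−1)⁻¹(𝟙𝟙ᵀ − I), and any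
symmetric idempotent H with H𝟙 = 𝟙: (I − H)(I − ρW) = (1 + ρ/(n−1))(I − H) for
every ρ. -/
theorem complete_graph_residual_factor (n : ℕ) (hn : 2 ≤ n)
    (W H : Matrix (Fin n) (Fin n) ℝ)
    (hW : W = ((n : ℝ) - 1)⁻¹ • (Matrix.of (fun _ _ : Fin n => (1 : ℝ)) - 1))
    (hH_symm : Hᵀ = H) (hH_idem : H * H = H)
    (hH_one : H.mulVec (fun _ => (1 : ℝ)) = fun _ => (1 : ℝ)) :
    ∀ ρ : ℝ, (1 - H) * (1 - ρ • W) = (1 + ρ / ((n : ℝ) - 1)) • (1 - H) := by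
  intro ρ
  set J : Matrix (Fin n) (Fin n) ℝ := Matrix.of (fun _ _ : Fin n => (1 : ℝ)) with hJ
  have hHJ : H * J = J := by
    ext i j
    simpa [Matrix.mul_apply, Matrix.mulVec, dotProduct, hJ] using congrFun hH_one i
  have key : (1 - H) * (J - 1) = -(1 - H) := by
    rw [Matrix.sub_mul, Matrix.mul_sub, Matrix.mul_sub, hHJ, Matrix.one_mul, Matrix.one_mul,
      Matrix.mul_one]
    abel
  rw [hW, Matrix.mul_sub, Matrix.mul_one, smul_smul, Matrix.mul_smul, key, div_eq_mul_inv,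
    add_smul, one_smul, smul_neg, sub_neg_eq_add]
end
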